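/- Let k ≥ 1 be an integer and β(1),…,β(k) real numbers, with f as defined, and let s_r be the largest maximizer of f on {0,1,…,k}. If s_r ≤ k − 1, then the iterated integral A₂ = ∫₀^1 u_k^{β(k)} ( ∫₀^{u_k} u_{k−1}^{β(k−1)} ( ⋯ ( ∫₀^{u_{s_r+2}} u_{s_r+1}^{β(s_r+1)} du_{s_r+1} ) ⋯ ) du_{k−1} ) du_k is finite. -/

import Mathlib

open Finset Real MeasureTheory ENNReal

/-- `f k β s = -s + ∑_{i=s+1}^k β i`. -/
noncomputable def maxF (k : ℕ) (β : ℕ → ℝ) (s : ℕ) : ℝ :=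
  -(s : ℝ) + ∑ i ∈ Finset.Icc (s + 1) k, β i

/-- `nestIoo β n j b` is the iterated integral
`∫_0^b u_j^{β j} ( ∫_0^{u_j} u_{j-1}^{β (j-1)} ( ⋯ ) du_{j-1} ) du_j`
with `n` nested integrals (indices `j, j-1, …, j-n+1`), taken in `ℝ≥0∞`. -/
noncomputable def nestIoo (β : ℕ → ℝ) : ℕ → ℕ → ℝ → ℝ≥0∞
  | 0, _, _ => 1
  | n + 1, j, b => ∫⁻ u in Set.Ioo 0 b, ENNReal.ofReal (u ^ β j) * nestIoo β n (j - 1) u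

lemma lintegral_rpow_Ioo (p b : ℝ) (hp : -1 < p) (hb : 0 ≤ b) :
    ∫⁻ u in Set.Ioo 0 b, ENNReal.ofReal (u ^ p) = ENNReal.ofReal (b ^ (p+1) / (p+1)) := by
  rcases eq_or_lt_of_le hb with h|h
  · simp [← h, Real.zero_rpow (by linarith : p+1 ≠ 0)]
  rw [← ofReal_integral_eq_lintegral_ofReal]
  · congr 1
    rw [← MeasureTheory.integral_Ioc_eq_integral_Ioo,
      ← intervalIntegral.integral_of_le h.le, integral_rpow (Or.inl hp)]
    rw [Real.zero_rpow (by linarith : p+1 ≠ 0)]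
    ring
  · rw [← MeasureTheory.IntegrableOn]
    exact ((intervalIntegral.intervalIntegrable_rpow' hp (a:=0) (b:=b)).1.mono_set
      Set.Ioo_subset_Ioc_self)
  · filter_upwards [ae_restrict_mem measurableSet_Ioo] with u hu
    exact Real.rpow_nonneg hu.1.le p

lemma key_nest (k : ℕ) (β : ℕ → ℝ) (sr : ℕ)
    (hpos : ∀ m, 1 ≤ m → m ≤ k - sr → 0 < ∑ i ∈ Finset.Icc (sr+1) (sr+m), (β i + 1)) :
    ∀ n, n ≤ k - sr → ∃ C : ℝ, 0 < C ∧ ∀ b : ℝ, 0 ≤ b →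
      nestIoo β n (sr + n) b
        = ENNReal.ofReal C * ENNReal.ofReal (b ^ (∑ i ∈ Finset.Icc (sr+1) (sr+n), (β i + 1))) := by
  intro n
  induction n with
  | zero =>
    intro _
    refine ⟨1, one_pos, fun b hb => ?_⟩
    simp [nestIoo, Finset.Icc_self, Real.rpow_natCast]
  | succ n ih =>
    intro hn
    obtain ⟨C, hC, hform⟩ := ih (le_trans (Nat.le_succ n) hn)
    set E : ℝ := ∑ i ∈ Finset.Icc (sr+1) (sr+n), (β i + 1) with hE
    have hE1 : ∑ i ∈ Finset.Icc (sr+1) (sr+(n+1)), (β i + 1) = E + (β (sr+n+1) + 1) := by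
      rw [hE, show sr + (n+1) = (sr + n) + 1 by ring, Finset.sum_Icc_succ_top (by omega)]
    have hEpos : 0 < E + (β (sr+n+1) + 1) := by
      have := hpos (n+1) (by omega) hn
      rwa [hE1] at this
    set p : ℝ := β (sr+n+1) + E with hp
    have hp1 : p + 1 = E + (β (sr+n+1) + 1) := by ring
    have hpgt : -1 < p := by linarith
    have hpp : 0 < p + 1 := by rw [hp1]; exact hEpos
    refine ⟨C * (1 / (p+1)), by positivity, fun b hb => ?_⟩
    have hunfold : nestIoo β (n+1) (sr+(n+1)) b
        = ∫⁻ u in Set.Ioo 0 b, ENNReal.ofReal (u ^ β (sr+n+1)) * nestIoo β n (sr+n) u := by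
      show nestIoo β (n+1) (sr+n+1) b = _
      rw [nestIoo]
      norm_num
    rw [hunfold]
    have hcong : ∫⁻ u in Set.Ioo 0 b, ENNReal.ofReal (u ^ β (sr+n+1)) * nestIoo β n (sr+n) u
        = ∫⁻ u in Set.Ioo 0 b, ENNReal.ofReal C * ENNReal.ofReal (u ^ p) := by
      refine setLIntegral_congr_fun measurableSet_Ioo (
        fun u hu => ?_)
      rw [hform u hu.1.le, hp, Real.rpow_add hu.1,
        ofReal_mul (Real.rpow_nonneg hu.1.le _)]
      ring
    rw [hcong, lintegral_const_mul' _ _ ofReal_ne_top, lintegral_rpow_Ioo p b hpgt hb,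
      hE1, ← hp1]
    rw [← ofReal_mul hC.le, ← ofReal_mul (by positivity)]
    congr 1
    ring

theorem second_integral_finite (k : ℕ) (hk : 1 ≤ k) (β : ℕ → ℝ) (sr : ℕ)
    (hsrmem : sr ∈ Finset.range (k + 1))
    (hsrmax : ∀ s ∈ Finset.range (k + 1), maxF k β s ≤ maxF k β sr)
    (hsrtop : ∀ s ∈ Finset.range (k + 1), maxF k β s = maxF k β sr → s ≤ sr)
    (hsrlt : sr ≤ k - 1) :
    nestIoo β (k - sr) k 1 < ⊤ := by
  have hsrk : sr < k := by
    have := Finset.mem_range.1 hsrmem; omega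
  have hpos : ∀ m, 1 ≤ m → m ≤ k - sr → 0 < ∑ i ∈ Finset.Icc (sr+1) (sr+m), (β i + 1) := by
    intro m h1 h2
    have hmk : sr + m ≤ k := by omega
    have hmem : sr + m ∈ Finset.range (k+1) := Finset.mem_range.2 (by omega)
    have hlt : maxF k β (sr + m) < maxF k β sr := by
      refine lt_of_le_of_ne (hsrmax _ hmem) fun heq => ?_
      have := hsrtop _ hmem heq
      omega
    have hsplit : (∑ i ∈ Finset.Ioc sr (sr+m), β i) + ∑ i ∈ Finset.Ioc (sr+m) k, β i
        = ∑ i ∈ Finset.Ioc sr k, β i :=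
      Finset.sum_Ioc_consecutive _ (by omega) hmk
    have h01 : ∑ i ∈ Finset.Icc (sr+1) (sr+m), (β i + 1)
        = (∑ i ∈ Finset.Ioc sr (sr+m), β i) + m := by
      rw [← Finset.Icc_add_one_left_eq_Ioc, Finset.sum_add_distrib, Finset.sum_const, nsmul_eq_mul,
        mul_one, Nat.card_Icc]
      norm_num
    have h02 : maxF k β sr = -(sr:ℝ) + ∑ i ∈ Finset.Ioc sr k, β i := by
      rw [maxF, Finset.Icc_add_one_left_eq_Ioc]
    have h03 : maxF k β (sr+m) = -((sr:ℝ)+m) + ∑ i ∈ Finset.Ioc (sr+m) k, β i := by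
      rw [maxF, Finset.Icc_add_one_left_eq_Ioc]; push_cast; ring_nf
    rw [h01]
    rw [h02, h03] at hlt
    linarith
  obtain ⟨C, hC, hform⟩ := key_nest k β sr hpos (k - sr) le_rfl
  have h1 := hform 1 zero_le_one
  rw [show sr + (k - sr) = k by omega] at h1
  rw [h1, Real.one_rpow, ofReal_one, mul_one]
  exact ofReal_lt_top
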